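/- If the sequence (Aₘ)_{m∈ℤ} admits an exponential dichotomy with respect to the norms ‖·‖ₘ and B is an admissible Banach sequence space, then T_B : D(T_B) ⊂ Y_B → Y_B is bijective, i.e. for every y ∈ Y_B there is a unique x ∈ Y_B with xₙ − A_{n−1}x_{n−1} = yₙ for all n ∈ ℤ. -/

import Mathlib

/-- A Banach sequence space: a linear subspace of the real sequences indexed by `ℤ`,
with a norm that is monotone with respect to pointwise absolute value, and complete. -/
structure BanachSeqSpace where
  mem : (ℤ → ℝ) → Prop
  bnorm : (ℤ → ℝ) → ℝ
  zero_mem : mem 0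
  add_mem : ∀ {s t : ℤ → ℝ}, mem s → mem t → mem (s + t)
  smul_mem : ∀ (c : ℝ) {s : ℤ → ℝ}, mem s → mem (c • s)
  bnorm_nonneg : ∀ s : ℤ → ℝ, 0 ≤ bnorm s
  bnorm_eq_zero : ∀ {s : ℤ → ℝ}, mem s → (bnorm s = 0 ↔ s = 0)
  bnorm_add_le : ∀ {s t : ℤ → ℝ}, mem s → mem t → bnorm (s + t) ≤ bnorm s + bnorm t
  bnorm_smul : ∀ (c : ℝ) (s : ℤ → ℝ), bnorm (c • s) = |c| * bnorm s
  mono_mem : ∀ {s t : ℤ → ℝ}, mem t → (∀ n, |s n| ≤ |t n|) → mem s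
  mono_norm : ∀ {s t : ℤ → ℝ}, mem t → (∀ n, |s n| ≤ |t n|) → bnorm s ≤ bnorm t
  complete : ∀ u : ℕ → ℤ → ℝ, (∀ k, mem (u k)) →
    (∀ ε : ℝ, 0 < ε → ∃ K : ℕ, ∀ k l, K ≤ k → K ≤ l → bnorm (u k - u l) < ε) →
    ∃ s : ℤ → ℝ, mem s ∧ ∀ ε : ℝ, 0 < ε → ∃ K : ℕ, ∀ k, K ≤ k → bnorm (u k - s) < ε

/-- An admissible Banach sequence space: contains the characteristic functions of
singletons with positive norm, and is invariant under shifts with a uniform bound `N`. -/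
structure AdmissibleSeqSpace extends BanachSeqSpace where
  N : ℝ
  N_pos : 0 < N
  indicator_mem : ∀ n : ℤ, mem (fun k => if k = n then (1 : ℝ) else 0)
  indicator_pos : ∀ n : ℤ, 0 < bnorm (fun k => if k = n then (1 : ℝ) else 0)
  shift_mem : ∀ {s : ℤ → ℝ}, mem s → ∀ m : ℤ, mem (fun n => s (n + m))
  shift_norm : ∀ {s : ℤ → ℝ}, mem s → ∀ m : ℤ, bnorm (fun n => s (n + m)) ≤ N * bnorm s

/-- `opComp A k m` is the composition `A(m+k, m) = A_{m+k-1} ∘ ⋯ ∘ A_m`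
(the identity when `k = 0`). -/
def opComp {X : Type*} [NormedAddCommGroup X] [NormedSpace ℝ X]
    (A : ℤ → X →L[ℝ] X) : ℕ → ℤ → X →L[ℝ] X
  | 0, _ => ContinuousLinearMap.id ℝ X
  | k + 1, m => (A (m + k)).comp (opComp A k m)

namespace AdmissibleSeqSpace

lemma mem_finsum (B : AdmissibleSeqSpace) (f : ℕ → ℤ → ℝ) (h : ∀ k, B.mem (f k))
    (F : Finset ℕ) : B.mem (∑ k ∈ F, f k) :=
  Finset.sum_induction f B.mem (fun _ _ ha hb => B.add_mem ha hb) B.zero_mem (fun k _ => h k)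

lemma bnorm_finsum_le (B : AdmissibleSeqSpace) (f : ℕ → ℤ → ℝ) (h : ∀ k, B.mem (f k))
    (F : Finset ℕ) : B.bnorm (∑ k ∈ F, f k) ≤ ∑ k ∈ F, B.bnorm (f k) := by
  classical
  induction F using Finset.cons_induction with
  | empty =>
      simp only [Finset.sum_empty]
      exact le_of_eq ((B.bnorm_eq_zero B.zero_mem).mpr rfl)
  | cons a F ha ih =>
      rw [Finset.sum_cons, Finset.sum_cons]
      calc B.bnorm (f a + ∑ k ∈ F, f k)
          ≤ B.bnorm (f a) + B.bnorm (∑ k ∈ F, f k) :=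
            B.bnorm_add_le (h a) (B.mem_finsum f h F)
        _ ≤ B.bnorm (f a) + ∑ k ∈ F, B.bnorm (f k) := by linarith

lemma eval_bound (B : AdmissibleSeqSpace) {s : ℤ → ℝ} (hs : B.mem s) (n : ℤ) :
    |s n| * B.bnorm (fun k => if k = (0:ℤ) then (1:ℝ) else 0) ≤ B.N * B.bnorm s := by
  set e : ℤ → ℤ → ℝ := fun m k => if k = m then (1:ℝ) else 0 with he
  have h1 : B.bnorm (e 0) ≤ B.N * B.bnorm (e n) := by
    have := B.shift_norm (B.indicator_mem n) n
    have hfe : (fun k => e n (k + n)) = e 0 := by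
      funext k; simp only [he]
      by_cases hk : k = 0 <;> simp [hk] <;> omega
    rwa [hfe] at this
  have h2 : |s n| * B.bnorm (e n) ≤ B.bnorm s := by
    have hb := B.bnorm_smul (|s n|) (e n)
    have hmono : B.bnorm (|s n| • e n) ≤ B.bnorm s := by
      apply B.mono_norm hs
      intro k
      by_cases hk : k = n
      · subst hk; simp [he, abs_abs]
      · simp [he, hk]
    rw [hb, abs_abs] at hmono
    exact hmono
  calc |s n| * B.bnorm (e 0) ≤ |s n| * (B.N * B.bnorm (e n)) := by
        exact mul_le_mul_of_nonneg_left h1 (abs_nonneg _)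
    _ = B.N * (|s n| * B.bnorm (e n)) := by ring
    _ ≤ B.N * B.bnorm s := mul_le_mul_of_nonneg_left h2 (le_of_lt B.N_pos)

lemma eval_le (B : AdmissibleSeqSpace) {s : ℤ → ℝ} (hs : B.mem s) (n : ℤ) :
    |s n| ≤ B.N * B.bnorm s / B.bnorm (fun k => if k = (0:ℤ) then (1:ℝ) else 0) := by
  rw [le_div_iff₀ (B.indicator_pos 0)]
  exact B.eval_bound hs n

end AdmissibleSeqSpace

lemma opComp_succ_apply {X : Type*} [NormedAddCommGroup X] [NormedSpace ℝ X]
    (A : ℤ → X →L[ℝ] X) (k : ℕ) (m : ℤ) (v : X) :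
    opComp A (k+1) m v = A (m + k) (opComp A k m v) := rfl

lemma opComp_zero_apply {X : Type*} [NormedAddCommGroup X] [NormedSpace ℝ X]
    (A : ℤ → X →L[ℝ] X) (m : ℤ) (v : X) : opComp A 0 m v = v := rfl

lemma opComp_succ' {X : Type*} [NormedAddCommGroup X] [NormedSpace ℝ X]
    (A : ℤ → X →L[ℝ] X) (k : ℕ) (m : ℤ) (v : X) :
    opComp A (k+1) m v = opComp A k (m+1) (A m v) := by
  induction k generalizing m v with
  | zero => simp [opComp_succ_apply, opComp_zero_apply]
  | succ k ih =>
      rw [opComp_succ_apply A (k+1) m v, ih m v, opComp_succ_apply]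
      have e : m + ((k:ℤ)+1) = (m+1) + k := by ring
      push_cast
      rw [e]

/-- If `(Aₘ)` admits an exponential dichotomy with respect to the norms `nn m` and `B` is
an admissible Banach sequence space, then `T_B` is bijective: for every `y ∈ Y_B` there is
a unique `x ∈ Y_B` with `xₙ - A_{n-1} x_{n-1} = yₙ` for all `n`. -/
theorem stmt14 (B : AdmissibleSeqSpace) {X : Type*} [NormedAddCommGroup X]
    [NormedSpace ℝ X] [CompleteSpace X]
    (A : ℤ → X →L[ℝ] X)
    (nn : ℤ → X → ℝ)
    (hnadd : ∀ (n : ℤ) (u v : X), nn n (u + v) ≤ nn n u + nn n v)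
    (hnsmul : ∀ (n : ℤ) (c : ℝ) (v : X), nn n (c • v) = |c| * nn n v)
    (heq : ∀ n : ℤ, ∃ c C : ℝ, 0 < c ∧ 0 < C ∧
      ∀ v : X, c * ‖v‖ ≤ nn n v ∧ nn n v ≤ C * ‖v‖)
    (P : ℤ → X →L[ℝ] X)
    (hproj : ∀ (m : ℤ) (v : X), P m (P m v) = P m v)
    (hcomm : ∀ (m : ℤ) (v : X), A m (P m v) = P (m + 1) (A m v))
    (hbij : ∀ m : ℤ, Set.BijOn (A m) {v : X | P m v = 0} {v : X | P (m + 1) v = 0})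
    (D lam mu : ℝ) (hD : 0 < D) (hlam0 : 0 < lam) (hlam1 : lam < 1) (hmu : 1 < mu)
    (hstable : ∀ (m : ℤ) (v : X) (k : ℕ),
      nn (m + k) (opComp A k m (P m v)) ≤ D * lam ^ k * nn m v)
    (Ainv : ℕ → ℤ → X → X)
    (hAinv_ker : ∀ (k : ℕ) (m : ℤ) (v : X), P m v = 0 → P (m - k) (Ainv k m v) = 0)
    (hAinv_comp : ∀ (k : ℕ) (m : ℤ) (v : X), P m v = 0 → opComp A k (m - k) (Ainv k m v) = v)
    (hunstable : ∀ (k : ℕ) (m : ℤ) (v : X),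
      nn (m - k) (Ainv k m (v - P m v)) ≤ D * (mu ^ k)⁻¹ * nn m v) :
    ∀ y : ℤ → X, B.mem (fun n => nn n (y n)) →
      ∃! x : ℤ → X, B.mem (fun n => nn n (x n)) ∧
        ∀ n : ℤ, x n - A (n - 1) (x (n - 1)) = y n := by
  classical
  -- basic properties of nn
  have hnn_nonneg : ∀ (n : ℤ) (v : X), 0 ≤ nn n v := by
    intro n v
    obtain ⟨c, C, hc, hC, h⟩ := heq n
    have := (h v).1
    nlinarith [norm_nonneg v]
  have hnn0 : ∀ n : ℤ, nn n 0 = 0 := by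
    intro n
    have := hnsmul n 0 0
    simpa using this
  have hnn_eq0 : ∀ (n : ℤ) (v : X), nn n v ≤ 0 → v = 0 := by
    intro n v hv
    obtain ⟨c, C, hc, hC, h⟩ := heq n
    have h1 := (h v).1
    have : ‖v‖ ≤ 0 := by nlinarith
    simpa using le_antisymm this (norm_nonneg v)
  have hnn_neg : ∀ (n : ℤ) (v : X), nn n (-v) = nn n v := by
    intro n v
    have := hnsmul n (-1) v
    simpa using this
  have hnn_sub : ∀ (n : ℤ) (u v : X), nn n (u - v) ≤ nn n u + nn n v := by
    intro n u v
    rw [sub_eq_add_neg]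
    calc nn n (u + -v) ≤ nn n u + nn n (-v) := hnadd n u (-v)
      _ = nn n u + nn n v := by rw [hnn_neg]
  have hcont : ∀ n : ℤ, Continuous (nn n) := by
    intro n
    obtain ⟨c, C, hc, hC, h⟩ := heq n
    have hlip : ∀ u v : X, |nn n u - nn n v| ≤ C * ‖u - v‖ := by
      intro u v
      rw [abs_le]
      constructor
      · have h1 : nn n v ≤ nn n (v - u) + nn n u := by
          calc nn n v = nn n ((v - u) + u) := by rw [sub_add_cancel]
            _ ≤ nn n (v - u) + nn n u := hnadd n _ _
        have h2 : nn n (v - u) ≤ C * ‖v - u‖ := (h _).2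
        rw [norm_sub_rev] at h2
        linarith
      · have h1 : nn n u ≤ nn n (u - v) + nn n v := by
          calc nn n u = nn n ((u - v) + v) := by rw [sub_add_cancel]
            _ ≤ nn n (u - v) + nn n v := hnadd n _ _
        have h2 : nn n (u - v) ≤ C * ‖u - v‖ := (h _).2
        linarith
    apply LipschitzWith.continuous (K := C.toNNReal)
    apply LipschitzWith.of_dist_le_mul
    intro u v
    rw [Real.dist_eq, dist_eq_norm, Real.coe_toNNReal C hC.le]
    exact hlip u v
  have hnn_finsum : ∀ (n : ℤ) (f : ℕ → X) (F : Finset ℕ),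
      nn n (∑ k ∈ F, f k) ≤ ∑ k ∈ F, nn n (f k) := by
    intro n f F
    induction F using Finset.cons_induction with
    | empty => simp [hnn0]
    | cons a F ha ih =>
        rw [Finset.sum_cons, Finset.sum_cons]
        calc nn n (f a + ∑ k ∈ F, f k) ≤ nn n (f a) + nn n (∑ k ∈ F, f k) := hnadd n _ _
          _ ≤ nn n (f a) + ∑ k ∈ F, nn n (f k) := by linarith
  have hnn_tsum : ∀ (n : ℤ) (f : ℕ → X) (g : ℕ → ℝ), Summable f → Summable g →
      (∀ k, nn n (f k) ≤ g k) → nn n (∑' k, f k) ≤ ∑' k, g k := by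
    intro n f g hf hg hfg
    have h1 : Filter.Tendsto (fun F : Finset ℕ => nn n (∑ k ∈ F, f k)) Filter.atTop
        (nhds (nn n (∑' k, f k))) :=
      (((hcont n).tendsto _).comp hf.hasSum)
    apply le_of_tendsto h1
    apply Filter.Eventually.of_forall
    intro F
    calc nn n (∑ k ∈ F, f k) ≤ ∑ k ∈ F, nn n (f k) := hnn_finsum n f F
      _ ≤ ∑ k ∈ F, g k := Finset.sum_le_sum (fun k _ => hfg k)
      _ ≤ ∑' k, g k := Summable.sum_le_tsum F (fun k _ => le_trans (hnn_nonneg n (f k)) (hfg k)) hg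
  -- summability helpers
  have hsumR : ∀ (a b : ℝ) (u : ℕ → ℝ), 0 ≤ b → b < 1 → (∀ k, 0 ≤ u k) →
      (∀ k, u k ≤ a * b ^ k) → Summable u := by
    intro a b u hb hb1 hu hub
    exact Summable.of_nonneg_of_le hu hub ((summable_geometric_of_lt_one hb hb1).mul_left a)
  have hsumX : ∀ (n : ℤ) (f : ℕ → X) (a b : ℝ), 0 ≤ b → b < 1 →
      (∀ k, nn n (f k) ≤ a * b ^ k) → Summable f := by
    intro n f a b hb hb1 hbd
    obtain ⟨c, C, hc, hC, h⟩ := heq n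
    apply Summable.of_norm_bounded (g := fun k => c⁻¹ * (a * b ^ k))
    · exact ((summable_geometric_of_lt_one hb hb1).mul_left a).mul_left _
    · intro k
      have h1 := (h (f k)).1
      have h2 := hbd k
      rw [← le_div_iff₀' hc] at h1
      calc ‖f k‖ ≤ nn n (f k) / c := h1
        _ = c⁻¹ * nn n (f k) := by rw [div_eq_inv_mul]
        _ ≤ c⁻¹ * (a * b ^ k) := by
            exact mul_le_mul_of_nonneg_left h2 (inv_nonneg.mpr hc.le)
  have hmu0 : (0:ℝ) < mu := lt_trans one_pos hmu
  have hmui0 : (0:ℝ) ≤ mu⁻¹ := (inv_nonneg.mpr hmu0.le)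
  have hmui1 : mu⁻¹ < 1 := by
    rw [inv_lt_one_iff₀]; right; exact hmu
  -- dichotomy structure lemmas
  have hPcomm : ∀ (k : ℕ) (m : ℤ) (v : X),
      opComp A k m (P m v) = P (m + k) (opComp A k m v) := by
    intro k
    induction k with
    | zero => intro m v; simp [opComp_zero_apply]
    | succ k ih =>
        intro m v
        rw [opComp_succ_apply, opComp_succ_apply, ih m v, hcomm (m + k)]
        have e : m + ((k:ℤ)+1) = (m + k) + 1 := by ring
        push_cast
        rw [e]
  have hkerP : ∀ (k : ℕ) (m : ℤ) (v : X), P m v = 0 → P (m + k) (opComp A k m v) = 0 := by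
    intro k m v hv
    rw [← hPcomm, hv, map_zero]
  have hinj : ∀ (k : ℕ) (m : ℤ) (v w : X), P m v = 0 → P m w = 0 →
      opComp A k m v = opComp A k m w → v = w := by
    intro k
    induction k with
    | zero => intro m v w _ _ h; simpa [opComp_zero_apply] using h
    | succ k ih =>
        intro m v w hv hw h
        rw [opComp_succ' A k m v, opComp_succ' A k m w] at h
        have hAv : P (m+1) (A m v) = 0 := by rw [← hcomm, hv, map_zero]
        have hAw : P (m+1) (A m w) = 0 := by rw [← hcomm, hw, map_zero]
        have := ih (m+1) (A m v) (A m w) hAv hAw h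
        exact (hbij m).injOn hv hw this
  have hAinv_eq : ∀ (k : ℕ) (m : ℤ) (v w : X), P m v = 0 → P (m - k) w = 0 →
      opComp A k (m - k) w = v → w = Ainv k m v := by
    intro k m v w hv hw hcw
    exact hinj k (m - k) w (Ainv k m v) hw (hAinv_ker k m v hv)
      (by rw [hcw, hAinv_comp k m v hv])
  have hA_Ainv : ∀ (k : ℕ) (m : ℤ) (v : X), P m v = 0 →
      A (m - k - 1) (Ainv (k+1) m v) = Ainv k m v := by
    intro k m v hv
    have e1 : m - ((k:ℤ)+1) = m - k - 1 := by ring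
    have hker1 : P (m - k - 1) (Ainv (k+1) m v) = 0 := by
      have := hAinv_ker (k+1) m v hv
      push_cast at this
      rwa [e1] at this
    have hcomp1 : opComp A (k+1) (m - k - 1) (Ainv (k+1) m v) = v := by
      have := hAinv_comp (k+1) m v hv
      push_cast at this
      rwa [e1] at this
    refine hAinv_eq k m v (A (m - (k:ℤ) - 1) (Ainv (k+1) m v)) hv ?_ ?_
    · have := hcomm (m - k - 1) (Ainv (k+1) m v)
      rw [hker1, map_zero] at this
      have e2 : m - (k:ℤ) - 1 + 1 = m - k := by ring
      rw [e2] at this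
      exact this.symm
    · have e3 : (m - (k:ℤ) - 1) + 1 = m - k := by ring
      have h4 := opComp_succ' A k (m-(k:ℤ)-1) (Ainv (k+1) m v)
      rw [e3] at h4
      rw [← h4]
      exact hcomp1
  have hAinv0 : ∀ (m : ℤ) (v : X), P m v = 0 → Ainv 0 m v = v := by
    intro m v hv
    have := hAinv_comp 0 m v hv
    simpa [opComp_zero_apply] using this
  intro y hy
  set s : ℤ → ℝ := fun n => nn n (y n) with hsdef
  set M : ℝ := B.N * B.bnorm s / B.bnorm (fun k => if k = (0:ℤ) then (1:ℝ) else 0) with hMdef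
  have hM : ∀ n : ℤ, s n ≤ M := by
    intro n
    exact le_trans (le_abs_self _) (B.eval_le hy n)
  have hM0 : 0 ≤ M := le_trans (hnn_nonneg 0 (y 0)) (hM 0)
  -- the two pieces of the solution
  set solP : ℤ → ℕ → X := fun n k => opComp A k (n - k) (P (n - k) (y (n - k))) with hsolP
  set solQ : ℤ → ℕ → X := fun n k => Ainv k (n + k) (y (n + k) - P (n + k) (y (n + k))) with hsolQ
  have hPest : ∀ (n : ℤ) (k : ℕ), nn n (solP n k) ≤ D * lam ^ k * s (n - k) := by
    intro n k
    have h := hstable (n - k) (y (n - k)) k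
    have e : n - (k:ℤ) + k = n := by ring
    rw [e] at h
    exact h
  have hQest : ∀ (n : ℤ) (k : ℕ), nn n (solQ n k) ≤ D * mu⁻¹ ^ k * s (n + k) := by
    intro n k
    have h := hunstable k (n + k) (y (n + k))
    have e : n + (k:ℤ) - k = n := by ring
    rw [e, ← inv_pow] at h
    exact h
  have hPestM : ∀ (n : ℤ) (k : ℕ), nn n (solP n k) ≤ (D * M) * lam ^ k := by
    intro n k
    calc nn n (solP n k) ≤ D * lam ^ k * s (n - k) := hPest n k
      _ ≤ D * lam ^ k * M := by
          apply mul_le_mul_of_nonneg_left (hM _) (by positivity)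
      _ = (D * M) * lam ^ k := by ring
  have hQestM : ∀ (n : ℤ) (k : ℕ), nn n (solQ n k) ≤ (D * M) * mu⁻¹ ^ k := by
    intro n k
    calc nn n (solQ n k) ≤ D * mu⁻¹ ^ k * s (n + k) := hQest n k
      _ ≤ D * mu⁻¹ ^ k * M := by
          apply mul_le_mul_of_nonneg_left (hM _) (by positivity)
      _ = (D * M) * mu⁻¹ ^ k := by ring
  have hsolP_sum : ∀ n : ℤ, Summable (solP n) := fun n =>
    hsumX n (solP n) (D * M) lam hlam0.le hlam1 (hPestM n)
  have hsolQ_sum : ∀ n : ℤ, Summable (solQ n) := fun n =>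
    hsumX n (solQ n) (D * M) mu⁻¹ hmui0 hmui1 (hQestM n)
  have hsolQ_sum' : ∀ n : ℤ, Summable (fun k => solQ n (k + 1)) := fun n =>
    (summable_nat_add_iff 1).mpr (hsolQ_sum n)
  set x : ℤ → X := fun n => (∑' k, solP n k) - (∑' k, solQ n (k + 1)) with hxdef
  -- key identities
  have hkey1 : ∀ (n : ℤ) (k : ℕ), solP n (k + 1) = A (n - 1) (solP (n - 1) k) := by
    intro n k
    simp only [hsolP]
    rw [opComp_succ_apply]
    push_cast
    rw [show n - ((k:ℤ) + 1) = n - 1 - k from by ring,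
      show n - 1 - (k:ℤ) + k = n - 1 from by ring]
  have hQker : ∀ m : ℤ, P m (y m - P m (y m)) = 0 := by
    intro m
    rw [map_sub, hproj]
    exact sub_self _
  have hkey2 : ∀ (n : ℤ) (k : ℕ), A (n - 1) (solQ (n - 1) (k + 1)) = solQ n k := by
    intro n k
    simp only [hsolQ]
    have h := hA_Ainv k (n + (k:ℤ)) _ (hQker (n + (k:ℤ)))
    rw [show n + (k:ℤ) - k - 1 = n - 1 from by ring] at h
    push_cast
    rw [show n - 1 + ((k:ℤ) + 1) = n + k from by ring]
    exact h
  have hkey1_0 : ∀ n : ℤ, solP n 0 = P n (y n) := by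
    intro n
    simp only [hsolP, Nat.cast_zero, sub_zero, opComp_zero_apply]
  have hkey2_0 : ∀ n : ℤ, solQ n 0 = y n - P n (y n) := by
    intro n
    simp only [hsolQ, Nat.cast_zero, add_zero]
    exact hAinv0 n _ (hQker n)
  have hEq : ∀ n : ℤ, x n - A (n - 1) (x (n - 1)) = y n := by
    intro n
    have eA : (∑' k, solP n k) = P n (y n) + A (n - 1) (∑' k, solP (n - 1) k) := by
      rw [Summable.tsum_eq_zero_add (hsolP_sum n), hkey1_0]
      congr 1
      rw [ContinuousLinearMap.map_tsum _ (hsolP_sum (n - 1))]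
      exact tsum_congr (fun k => hkey1 n k)
    have eB : A (n - 1) (∑' k, solQ (n - 1) (k + 1)) =
        (y n - P n (y n)) + ∑' k, solQ n (k + 1) := by
      rw [ContinuousLinearMap.map_tsum _ (hsolQ_sum' (n - 1))]
      have h1 : (∑' k, A (n - 1) (solQ (n - 1) (k + 1))) = ∑' k, solQ n k :=
        tsum_congr (fun k => hkey2 n k)
      rw [h1, Summable.tsum_eq_zero_add (hsolQ_sum n), hkey2_0]
    simp only [hxdef]
    rw [map_sub, eA, eB]
    abel
  -- membership of x in the sequence space
  have hbnorm_neg : ∀ u : ℤ → ℝ, B.bnorm (-u) = B.bnorm u := by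
    intro u
    have := B.bnorm_smul (-1) u
    rwa [neg_one_smul, abs_neg, abs_one, one_mul] at this
  have hmem_sub : ∀ u v : ℤ → ℝ, B.mem u → B.mem v → B.mem (u - v) := by
    intro u v hu hv
    have : u - v = u + (-1 : ℝ) • v := by rw [neg_one_smul, sub_eq_add_neg]
    rw [this]
    exact B.add_mem hu (B.smul_mem _ hv)
  set C0 : ℝ := D * B.N * B.bnorm s with hC0def
  have hC00 : 0 ≤ C0 := by
    rw [hC0def]
    exact mul_nonneg (mul_nonneg hD.le B.N_pos.le) (B.bnorm_nonneg s)
  set termfun : ℕ → ℤ → ℝ := fun k n =>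
    D * lam ^ k * s (n + -(k:ℤ)) + D * mu⁻¹ ^ (k + 1) * s (n + ((k:ℤ) + 1)) with htf
  have hs_nonneg : ∀ n : ℤ, 0 ≤ s n := fun n => hnn_nonneg n (y n)
  have ha_sum : ∀ n : ℤ, Summable (fun k : ℕ => D * lam ^ k * s (n + -(k:ℤ))) := by
    intro n
    apply hsumR (D * M) lam _ hlam0.le hlam1
    · intro k
      have := hs_nonneg (n + -(k:ℤ))
      positivity
    · intro k
      calc D * lam ^ k * s (n + -(k:ℤ)) ≤ D * lam ^ k * M := by
            apply mul_le_mul_of_nonneg_left (hM _) (by positivity)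
        _ = (D * M) * lam ^ k := by ring
  have hb_sum : ∀ n : ℤ, Summable (fun k : ℕ => D * mu⁻¹ ^ (k + 1) * s (n + ((k:ℤ) + 1))) := by
    intro n
    apply hsumR (D * M * mu⁻¹) mu⁻¹ _ hmui0 hmui1
    · intro k
      have := hs_nonneg (n + ((k:ℤ) + 1))
      positivity
    · intro k
      calc D * mu⁻¹ ^ (k + 1) * s (n + ((k:ℤ) + 1)) ≤ D * mu⁻¹ ^ (k + 1) * M := by
            apply mul_le_mul_of_nonneg_left (hM _) (by positivity)
        _ = (D * M * mu⁻¹) * mu⁻¹ ^ k := by ring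
  have hterm_sum_pt : ∀ n : ℤ, Summable (fun k => termfun k n) := by
    intro n
    simp only [htf]
    exact (ha_sum n).add (hb_sum n)
  have hterm_nonneg : ∀ (k : ℕ) (n : ℤ), 0 ≤ termfun k n := by
    intro k n
    simp only [htf]
    have h1 := hs_nonneg (n + -(k:ℤ))
    have h2 := hs_nonneg (n + ((k:ℤ) + 1))
    positivity
  have hxn_le : ∀ n : ℤ, nn n (x n) ≤ ∑' k, termfun k n := by
    intro n
    have h1 : nn n (∑' k, solP n k) ≤ ∑' k : ℕ, D * lam ^ k * s (n + -(k:ℤ)) := by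
      apply hnn_tsum n _ _ (hsolP_sum n) (ha_sum n)
      intro k
      rw [show n + -(k:ℤ) = n - k from by ring]
      exact hPest n k
    have h2 : nn n (∑' k, solQ n (k + 1)) ≤ ∑' k : ℕ, D * mu⁻¹ ^ (k + 1) * s (n + ((k:ℤ) + 1)) := by
      apply hnn_tsum n _ _ (hsolQ_sum' n) (hb_sum n)
      intro k
      have := hQest n (k + 1)
      push_cast at this
      exact this
    calc nn n (x n) ≤ nn n (∑' k, solP n k) + nn n (∑' k, solQ n (k + 1)) := by
          simp only [hxdef]
          exact hnn_sub n _ _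
      _ ≤ (∑' k : ℕ, D * lam ^ k * s (n + -(k:ℤ)))
          + (∑' k : ℕ, D * mu⁻¹ ^ (k + 1) * s (n + ((k:ℤ) + 1))) := add_le_add h1 h2
      _ = ∑' k, termfun k n := by
          rw [← Summable.tsum_add (ha_sum n) (hb_sum n)]
  have hterm_split : ∀ k : ℕ, termfun k =
      (D * lam ^ k) • (fun n => s (n + -(k:ℤ)))
      + (D * mu⁻¹ ^ (k + 1)) • (fun n => s (n + ((k:ℤ) + 1))) := by
    intro k
    funext n
    simp only [htf, Pi.add_apply, Pi.smul_apply, smul_eq_mul]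
  have hterm_mem : ∀ k : ℕ, B.mem (termfun k) := by
    intro k
    rw [hterm_split k]
    exact B.add_mem (B.smul_mem _ (B.shift_mem hy (-(k:ℤ))))
      (B.smul_mem _ (B.shift_mem hy ((k:ℤ) + 1)))
  set r : ℕ → ℝ := fun k => C0 * lam ^ k + C0 * mu⁻¹ ^ (k + 1) with hrdef
  have hterm_norm : ∀ k : ℕ, B.bnorm (termfun k) ≤ r k := by
    intro k
    rw [hterm_split k, hrdef]
    have hm1 := B.shift_mem hy (-(k:ℤ))
    have hm2 := B.shift_mem hy ((k:ℤ) + 1)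
    calc B.bnorm ((D * lam ^ k) • (fun n => s (n + -(k:ℤ)))
          + (D * mu⁻¹ ^ (k + 1)) • (fun n => s (n + ((k:ℤ) + 1))))
        ≤ B.bnorm ((D * lam ^ k) • (fun n => s (n + -(k:ℤ))))
          + B.bnorm ((D * mu⁻¹ ^ (k + 1)) • (fun n => s (n + ((k:ℤ) + 1)))) :=
          B.bnorm_add_le (B.smul_mem _ hm1) (B.smul_mem _ hm2)
      _ = |D * lam ^ k| * B.bnorm (fun n => s (n + -(k:ℤ)))
          + |D * mu⁻¹ ^ (k + 1)| * B.bnorm (fun n => s (n + ((k:ℤ) + 1))) := by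
          rw [B.bnorm_smul, B.bnorm_smul]
      _ ≤ (D * lam ^ k) * (B.N * B.bnorm s) + (D * mu⁻¹ ^ (k + 1)) * (B.N * B.bnorm s) := by
          rw [abs_of_nonneg (by positivity), abs_of_nonneg (by positivity)]
          exact add_le_add
            (mul_le_mul_of_nonneg_left (B.shift_norm hy _) (by positivity))
            (mul_le_mul_of_nonneg_left (B.shift_norm hy _) (by positivity))
      _ = C0 * lam ^ k + C0 * mu⁻¹ ^ (k + 1) := by rw [hC0def]; ring
  have hr_sum : Summable r := by
    rw [hrdef]
    apply Summable.add
    · exact (summable_geometric_of_lt_one hlam0.le hlam1).mul_left C0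
    · apply hsumR (C0 * mu⁻¹) mu⁻¹ _ hmui0 hmui1
      · intro k; positivity
      · intro k
        apply le_of_eq
        ring
  set S : ℕ → ℤ → ℝ := fun K => ∑ k ∈ Finset.range K, termfun k with hSdef
  have hS_mem : ∀ K : ℕ, B.mem (S K) := fun K => B.mem_finsum termfun hterm_mem _
  have hScauchy : ∀ ε : ℝ, 0 < ε → ∃ K : ℕ, ∀ k l, K ≤ k → K ≤ l → B.bnorm (S k - S l) < ε := by
    have hdiff : ∀ k l : ℕ, l ≤ k →
        B.bnorm (S k - S l) ≤ (∑ i ∈ Finset.range k, r i) - ∑ i ∈ Finset.range l, r i := by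
      intro k l hlk
      have h1 : S k - S l = ∑ i ∈ Finset.Ico l k, termfun i := by
        rw [hSdef]
        exact (Finset.sum_Ico_eq_sub termfun hlk).symm
      rw [h1, ← Finset.sum_Ico_eq_sub r hlk]
      calc B.bnorm (∑ i ∈ Finset.Ico l k, termfun i)
          ≤ ∑ i ∈ Finset.Ico l k, B.bnorm (termfun i) :=
            B.bnorm_finsum_le termfun hterm_mem _
        _ ≤ ∑ i ∈ Finset.Ico l k, r i := Finset.sum_le_sum (fun i _ => hterm_norm i)
    have hcs : CauchySeq (fun K => ∑ i ∈ Finset.range K, r i) :=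
      hr_sum.hasSum.tendsto_sum_nat.cauchySeq
    rw [Metric.cauchySeq_iff] at hcs
    intro ε hε
    obtain ⟨K, hK⟩ := hcs ε hε
    refine ⟨K, fun k l hk hl => ?_⟩
    rcases le_total l k with h | h
    · calc B.bnorm (S k - S l) ≤ (∑ i ∈ Finset.range k, r i) - ∑ i ∈ Finset.range l, r i :=
            hdiff k l h
        _ ≤ |(∑ i ∈ Finset.range k, r i) - ∑ i ∈ Finset.range l, r i| := le_abs_self _
        _ < ε := by rw [← Real.dist_eq]; exact hK k hk l hl
    · have hneg : S k - S l = -(S l - S k) := by abel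
      rw [hneg, hbnorm_neg]
      calc B.bnorm (S l - S k) ≤ (∑ i ∈ Finset.range l, r i) - ∑ i ∈ Finset.range k, r i :=
            hdiff l k h
        _ ≤ |(∑ i ∈ Finset.range l, r i) - ∑ i ∈ Finset.range k, r i| := le_abs_self _
        _ < ε := by rw [← Real.dist_eq]; exact hK l hl k hk
  obtain ⟨t, ht_mem, ht_conv⟩ := B.complete S hS_mem hScauchy
  have ht_eq : ∀ n : ℤ, t n = ∑' k, termfun k n := by
    intro n
    have h1 : Filter.Tendsto (fun K => S K n) Filter.atTop (nhds (∑' k, termfun k n)) := by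
      have h := (hterm_sum_pt n).hasSum.tendsto_sum_nat
      have he : (fun K => S K n) = fun K => ∑ k ∈ Finset.range K, termfun k n := by
        funext K
        simp only [hSdef, Finset.sum_apply]
      rw [he]
      exact h
    have hb0 : Filter.Tendsto (fun K => B.bnorm (S K - t)) Filter.atTop (nhds 0) := by
      rw [Metric.tendsto_atTop]
      intro ε hε
      obtain ⟨K, hK⟩ := ht_conv ε hε
      refine ⟨K, fun k hk => ?_⟩
      rw [Real.dist_eq, sub_zero, abs_of_nonneg (B.bnorm_nonneg _)]
      exact hK k hk
    have h2 : Filter.Tendsto (fun K => S K n - t n) Filter.atTop (nhds 0) := by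
      apply squeeze_zero_norm (a := fun K =>
        (B.N / B.bnorm (fun k => if k = (0:ℤ) then (1:ℝ) else 0)) * B.bnorm (S K - t))
      · intro K
        have hmemdiff : B.mem (S K - t) := hmem_sub _ _ (hS_mem K) ht_mem
        have h := B.eval_le hmemdiff n
        rw [div_mul_eq_mul_div]
        simpa [Real.norm_eq_abs, Pi.sub_apply] using h
      · have := hb0.const_mul (B.N / B.bnorm (fun k => if k = (0:ℤ) then (1:ℝ) else 0))
        simpa using this
    have h3 := h1.sub h2
    simp only [sub_sub_cancel] at h3
    have := tendsto_nhds_unique tendsto_const_nhds h3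
    rw [this, sub_zero]
  have hx_mem : B.mem (fun n => nn n (x n)) := by
    apply B.mono_mem ht_mem
    intro n
    rw [ht_eq n, abs_of_nonneg (hnn_nonneg n (x n)),
      abs_of_nonneg (tsum_nonneg (fun k => hterm_nonneg k n))]
    exact hxn_le n
  -- uniqueness: homogeneous solutions in the space vanish
  have huniq : ∀ z : ℤ → X, B.mem (fun n => nn n (z n)) →
      (∀ n : ℤ, z n = A (n - 1) (z (n - 1))) → ∀ n : ℤ, z n = 0 := by
    intro z hz hrec
    set M' : ℝ := B.N * B.bnorm (fun n => nn n (z n)) /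
      B.bnorm (fun k => if k = (0:ℤ) then (1:ℝ) else 0) with hM'def
    have hM' : ∀ n : ℤ, nn n (z n) ≤ M' := fun n =>
      le_trans (le_abs_self _) (B.eval_le hz n)
    have hiter : ∀ (k : ℕ) (n : ℤ), z n = opComp A k (n - k) (z (n - k)) := by
      intro k
      induction k with
      | zero => intro n; simp [opComp_zero_apply]
      | succ k ih =>
          intro n
          rw [opComp_succ_apply]
          push_cast
          rw [show n - ((k:ℤ) + 1) = n - 1 - k from by ring,
            show n - 1 - (k:ℤ) + k = n - 1 from by ring, ← ih (n - 1)]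
          exact hrec n
    have hlimlam : Filter.Tendsto (fun k : ℕ => (D * M') * lam ^ k) Filter.atTop (nhds 0) := by
      have h := tendsto_pow_atTop_nhds_zero_of_lt_one hlam0.le hlam1
      have h2 := h.const_mul (D * M')
      simpa using h2
    have hlimmu : Filter.Tendsto (fun k : ℕ => (D * M') * mu⁻¹ ^ k) Filter.atTop (nhds 0) := by
      have h := tendsto_pow_atTop_nhds_zero_of_lt_one hmui0 hmui1
      have h2 := h.const_mul (D * M')
      simpa using h2
    have hPz : ∀ n : ℤ, P n (z n) = 0 := by
      intro n
      apply hnn_eq0 n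
      have hb : ∀ k : ℕ, nn n (P n (z n)) ≤ (D * M') * lam ^ k := by
        intro k
        have h1 : P n (z n) = opComp A k (n - k) (P (n - k) (z (n - k))) := by
          rw [hPcomm, show n - (k:ℤ) + k = n from by ring, ← hiter k n]
        have h2 := hstable (n - (k:ℤ)) (z (n - (k:ℤ))) k
        rw [show n - (k:ℤ) + k = n from by ring] at h2
        rw [h1]
        calc nn n (opComp A k (n - (k:ℤ)) (P (n - (k:ℤ)) (z (n - (k:ℤ)))))
            ≤ D * lam ^ k * nn (n - (k:ℤ)) (z (n - (k:ℤ))) := h2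
          _ ≤ D * lam ^ k * M' := mul_le_mul_of_nonneg_left (hM' _) (by positivity)
          _ = (D * M') * lam ^ k := by ring
      exact ge_of_tendsto hlimlam (Filter.Eventually.of_forall hb)
    have hq0 : ∀ m : ℤ, P m (z m - P m (z m)) = 0 := by
      intro m
      rw [map_sub, hproj]
      exact sub_self _
    have hQz : ∀ n : ℤ, z n - P n (z n) = 0 := by
      intro n
      apply hnn_eq0 n
      have hb : ∀ k : ℕ, nn n (z n - P n (z n)) ≤ (D * M') * mu⁻¹ ^ k := by
        intro k
        have hid : Ainv k (n + k) (z (n + (k:ℤ)) - P (n + (k:ℤ)) (z (n + (k:ℤ))))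
            = z n - P n (z n) := by
          symm
          apply hAinv_eq k (n + (k:ℤ)) _ _ (hq0 _)
          · rw [show n + (k:ℤ) - k = n from by ring]
            exact hq0 n
          · rw [show n + (k:ℤ) - k = n from by ring, map_sub, hPcomm]
            have h5 := hiter k (n + (k:ℤ))
            rw [show n + (k:ℤ) - k = n from by ring] at h5
            rw [← h5]
        have h6 := hunstable k (n + (k:ℤ)) (z (n + (k:ℤ)))
        rw [show n + (k:ℤ) - k = n from by ring, hid, ← inv_pow] at h6
        calc nn n (z n - P n (z n))
            ≤ D * mu⁻¹ ^ k * nn (n + (k:ℤ)) (z (n + (k:ℤ))) := h6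
          _ ≤ D * mu⁻¹ ^ k * M' := mul_le_mul_of_nonneg_left (hM' _) (by positivity)
          _ = (D * M') * mu⁻¹ ^ k := by ring
      exact ge_of_tendsto hlimmu (Filter.Eventually.of_forall hb)
    intro n
    have h1 := hPz n
    have h2 := hQz n
    calc z n = (z n - P n (z n)) + P n (z n) := by abel
      _ = 0 := by rw [h2, h1, add_zero]
  -- assemble
  refine ⟨x, ⟨hx_mem, hEq⟩, ?_⟩
  intro x' hx'
  obtain ⟨hx'_mem, hx'_eq⟩ := hx'
  have hz_mem : B.mem (fun n => nn n (x' n - x n)) := by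
    apply B.mono_mem (B.add_mem hx'_mem hx_mem)
    intro m
    simp only [Pi.add_apply]
    rw [abs_of_nonneg (hnn_nonneg m _),
      abs_of_nonneg (add_nonneg (hnn_nonneg m _) (hnn_nonneg m _))]
    exact hnn_sub m (x' m) (x m)
  have hz_rec : ∀ m : ℤ, x' m - x m = A (m - 1) (x' (m - 1) - x (m - 1)) := by
    intro m
    have e1 := hx'_eq m
    have e2 := hEq m
    have h3 : x' m - A (m - 1) (x' (m - 1)) = x m - A (m - 1) (x (m - 1)) := by
      rw [e1, e2]
    rw [sub_eq_sub_iff_sub_eq_sub] at h3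
    rw [map_sub]
    exact h3
  have hzero := huniq (fun m => x' m - x m) hz_mem hz_rec
  funext n
  exact sub_eq_zero.mp (hzero n)
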